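/- (Alternating sum cycle condition.) Let P be a γ×κ integer partitioning matrix for a tail-biting spatially-coupled code with coupling length L. A closed path (j₁,i₁,j₂,i₂,…,j_g,i_g) in the base matrix (with j_{g+1} = j₁), visiting entries (i_k, j_k) and (i_k, j_{k+1}) of P, gives rise to a cycle of length 2g in the protograph if and only if Σ_{k=1}^{g} (P_{i_k,j_k} − P_{i_k,j_{k+1}}) ≡ 0 (mod L). -/

import Mathlib

open Finset

/-- The alternating sum cycle condition for tail-biting SC codes: the lifted walk of a
closed path `(j₁,i₁,…,j_g,i_g)` in the base matrix, whose column-replica trajectory `T`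
satisfies `T_{k+1} = T_k + P_{i_k,j_k} − P_{i_k,j_{k+1}} (mod L)`, closes up (giving a
cycle of length `2g` in the protograph) iff the alternating sum of partitioning values
vanishes modulo `L`. -/
theorem alternating_sum_cycle_condition (γ κ L g : ℕ) [NeZero L] (hg : 2 ≤ g)
    (P : Fin γ → Fin κ → ℤ)
    (i : ℕ → Fin γ) (j : ℕ → Fin κ) (hclose : j g = j 0)
    (T : ℕ → ZMod L)
    (hT : ∀ k, T (k + 1) = T k + ((P (i k) (j k) - P (i k) (j (k + 1)) : ℤ) : ZMod L)) :
    T g = T 0 ↔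
      (∑ k ∈ Finset.range g, (P (i k) (j k) - P (i k) (j (k + 1)))) ≡ 0 [ZMOD (L : ℤ)] := by
  have key : ∀ n, T n = T 0 + ((∑ k ∈ Finset.range n,
      (P (i k) (j k) - P (i k) (j (k + 1))) : ℤ) : ZMod L) := by
    intro n
    induction n with
    | zero => simp
    | succ n ih =>
      rw [hT n, ih, Finset.sum_range_succ]
      push_cast
      ring
  rw [key g, add_eq_left, ZMod.intCast_zmod_eq_zero_iff_dvd,
    ← Int.modEq_zero_iff_dvd]
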